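/- Let a > 0, b > 0, s > 0, and 1 ≤ p < ∞. Then the following are equivalent: (i) there exists C ≥ 0 such that for every f ∈ L^p(ℂⁿ, dv_s) the function w ↦ |e^{−a|z|² + (a+b)⟨z,w⟩ − b|w|²}| f(w) is dv-integrable for a.e. z ∈ ℂⁿ and ∫_{ℂⁿ} |T_{a,b} f|^p dv_s ≤ C^p ∫_{ℂⁿ} |f|^p dv_s, where T_{a,b} f(z) = ∫_{ℂⁿ} |e^{−a|z|² + (a+b)⟨z,w⟩ − b|w|²}| f(w) dv(w); (ii) p·(a+b) = 2(s + p·a). -/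

import Mathlib

open scoped ENNReal NNReal

open MeasureTheory

/-- `|z|² = |z₁|² + ⋯ + |zₙ|²` on `ℂⁿ`. -/
noncomputable def nsq {n : ℕ} (z : Fin n → ℂ) : ℝ := ∑ i, Complex.normSq (z i)

/-- `⟨z,w⟩ = z₁·conj w₁ + ⋯ + zₙ·conj wₙ` on `ℂⁿ`. -/
noncomputable def herm {n : ℕ} (z w : Fin n → ℂ) : ℂ := ∑ i, z i * (starRingEnd ℂ) (w i)

/-- The Gaussian probability measure `dv_t(z) = (t/π)^n e^{-t|z|²} dv(z)` on `ℂⁿ`. -/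
noncomputable def gaussMeasure (n : ℕ) (t : ℝ) : Measure (Fin n → ℂ) :=
  volume.withDensity fun z => ENNReal.ofReal ((t / Real.pi) ^ n * Real.exp (-t * nsq z))

/-- The kernel `e^{-a|z|² + (a+b)⟨z,w⟩ - b|w|²}`. -/
noncomputable def kerAB {n : ℕ} (a b : ℝ) (z w : Fin n → ℂ) : ℂ :=
  Complex.exp (((-(a * nsq z) : ℝ) : ℂ) + ((a + b : ℝ) : ℂ) * herm z w
    - ((b * nsq w : ℝ) : ℂ))

open Real Complex

section aux

lemma g1d_int (t c : ℝ) (ht : 0 < t) : Integrable (fun x : ℝ => rexp (c * x - t * x ^ 2)) := by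
  have h := (integrable_cexp_quadratic (b := (t : ℂ)) (by simpa using ht) (c : ℂ) 0).norm
  convert h using 2 with x
  rw [Complex.norm_exp]
  congr 1
  simp [← Complex.ofReal_pow]
  ring

lemma g1d_eval (t c : ℝ) (ht : 0 < t) :
    ∫ x : ℝ, rexp (c * x - t * x ^ 2) = Real.sqrt (π / t) * rexp (c ^ 2 / (4 * t)) := by
  have h := integral_cexp_quadratic (b := (-t : ℂ)) (by simpa using ht) (c : ℂ) 0
  have h3 : (∫ x : ℝ, cexp (-(t:ℂ) * x ^ 2 + c * x + 0))
      = ((∫ x : ℝ, rexp (c * x - t * x ^ 2) : ℝ) : ℂ) := by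
    calc (∫ x : ℝ, cexp (-(t:ℂ) * x ^ 2 + c * x + 0))
        = ∫ x : ℝ, ((rexp (c * x - t * x ^ 2) : ℝ) : ℂ) := by
          congr 1 with x
          rw [Complex.ofReal_exp]
          congr 1
          push_cast
          ring
      _ = ((∫ x : ℝ, rexp (c * x - t * x ^ 2) : ℝ) : ℂ) := integral_ofReal
  rw [h3] at h
  have h4 : ((↑π / - -(t:ℂ)) ^ (1/2 : ℂ) * cexp (0 - (c:ℂ) ^ 2 / (4 * -(t:ℂ))))
      = ((Real.sqrt (π / t) * rexp (c ^ 2 / (4 * t)) : ℝ) : ℂ) := by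
    have e1 : ((π : ℂ) / - -(t:ℂ)) = ((π / t : ℝ) : ℂ) := by push_cast; ring
    have e2 : ((0:ℂ) - (c:ℂ) ^ 2 / (4 * -(t:ℂ))) = ((c ^ 2 / (4 * t) : ℝ) : ℂ) := by
      push_cast; ring
    have e3 : (1/2 : ℂ) = ((1/2 : ℝ) : ℂ) := by norm_num
    rw [e1, e2, e3, ← Complex.ofReal_exp, ← Complex.ofReal_cpow (by positivity),
      Real.sqrt_eq_rpow]
    norm_cast
  rw [h4] at h
  exact_mod_cast h

lemma gRR_int (t u v : ℝ) (ht : 0 < t) :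
    Integrable (fun q : ℝ × ℝ => rexp (u * q.1 - t * q.1 ^ 2) * rexp (v * q.2 - t * q.2 ^ 2)) := by
  rw [Measure.volume_eq_prod]
  exact (g1d_int t u ht).mul_prod (g1d_int t v ht)

lemma gRR_eval (t u v : ℝ) (ht : 0 < t) :
    ∫ q : ℝ × ℝ, rexp (u * q.1 - t * q.1 ^ 2) * rexp (v * q.2 - t * q.2 ^ 2)
        = (π / t) * rexp ((u ^ 2 + v ^ 2) / (4 * t)) := by
  rw [Measure.volume_eq_prod, integral_prod_mul (f := fun x => rexp (u * x - t * x ^ 2))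
    (g := fun y => rexp (v * y - t * y ^ 2)), g1d_eval t u ht, g1d_eval t v ht]
  rw [show √(π/t) * rexp (u^2/(4*t)) * (√(π/t) * rexp (v^2/(4*t)))
    = (√(π/t) * √(π/t)) * (rexp (u^2/(4*t)) * rexp (v^2/(4*t))) by ring]
  rw [← Real.exp_add, Real.mul_self_sqrt (by positivity)]
  congr 1
  ring

lemma gC_shape (t u v : ℝ) (w : ℂ) :
    rexp (u * w.re + v * w.im - t * Complex.normSq w)
      = rexp (u * w.re - t * w.re ^ 2) * rexp (v * w.im - t * w.im ^ 2) := by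
  rw [← Real.exp_add, Complex.normSq_apply]
  ring_nf

lemma gC_int (t u v : ℝ) (ht : 0 < t) :
    Integrable (fun w : ℂ => rexp (u * w.re + v * w.im - t * Complex.normSq w)) := by
  have h := (Complex.volume_preserving_equiv_real_prod.integrable_comp_emb
    Complex.measurableEquivRealProd.measurableEmbedding
    (g := fun q : ℝ × ℝ => rexp (u * q.1 - t * q.1 ^ 2) * rexp (v * q.2 - t * q.2 ^ 2))).2
    (gRR_int t u v ht)
  refine h.congr (Filter.Eventually.of_forall fun w => ?_)
  exact (gC_shape t u v w).symm

lemma gC_eval (t u v : ℝ) (ht : 0 < t) :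
    ∫ w : ℂ, rexp (u * w.re + v * w.im - t * Complex.normSq w)
      = (π / t) * rexp ((u ^ 2 + v ^ 2) / (4 * t)) := by
  rw [← gRR_eval t u v ht,
    ← Complex.volume_preserving_equiv_real_prod.integral_comp
      Complex.measurableEquivRealProd.measurableEmbedding
      (fun q : ℝ × ℝ => rexp (u * q.1 - t * q.1 ^ 2) * rexp (v * q.2 - t * q.2 ^ 2))]
  congr 1 with w
  exact gC_shape t u v w

lemma gPi_shape {n : ℕ} (t cc : ℝ) (z w : Fin n → ℂ) :
    rexp (cc * (herm z w).re - t * nsq w)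
      = ∏ i, rexp (cc * (z i).re * (w i).re + cc * (z i).im * (w i).im
          - t * Complex.normSq (w i)) := by
  rw [← Real.exp_sum]
  congr 1
  rw [herm, Complex.re_sum, nsq, Finset.mul_sum, Finset.mul_sum, ← Finset.sum_sub_distrib]
  congr 1 with i
  simp [Complex.mul_re]
  ring

lemma gPi_int {n : ℕ} (t cc : ℝ) (ht : 0 < t) (z : Fin n → ℂ) :
    Integrable (fun w : Fin n → ℂ => rexp (cc * (herm z w).re - t * nsq w)) := by
  simp_rw [gPi_shape]
  exact Integrable.fintype_prod
    (f := fun i (x : ℂ) => rexp (cc * (z i).re * x.re + cc * (z i).im * x.im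
      - t * Complex.normSq x))
    (fun i => gC_int t _ _ ht)

lemma gPi_eval {n : ℕ} (t cc : ℝ) (ht : 0 < t) (z : Fin n → ℂ) :
    ∫ w : Fin n → ℂ, rexp (cc * (herm z w).re - t * nsq w)
      = (π / t) ^ n * rexp (cc ^ 2 * nsq z / (4 * t)) := by
  simp_rw [gPi_shape]
  rw [integral_fintype_prod_volume_eq_prod
    (f := fun i (x : ℂ) => rexp (cc * (z i).re * x.re + cc * (z i).im * x.im
      - t * Complex.normSq x))]
  have : ∀ i, (∫ x : ℂ, rexp (cc * (z i).re * x.re + cc * (z i).im * x.im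
      - t * Complex.normSq x)) = (π / t) * rexp (cc ^ 2 * Complex.normSq (z i) / (4 * t)) := by
    intro i
    rw [gC_eval _ _ _ ht]
    congr 2
    rw [Complex.normSq_apply]
    ring
  simp_rw [this]
  rw [Finset.prod_mul_distrib, Finset.prod_const, ← Real.exp_sum, Finset.card_univ,
    Fintype.card_fin]
  congr 1
  rw [nsq, Finset.mul_sum, Finset.sum_div]

lemma gPi_lint {n : ℕ} (t cc : ℝ) (ht : 0 < t) (z : Fin n → ℂ) :
    ∫⁻ w : Fin n → ℂ, ENNReal.ofReal (rexp (cc * (herm z w).re - t * nsq w))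
      = ENNReal.ofReal ((π / t) ^ n * rexp (cc ^ 2 * nsq z / (4 * t))) := by
  rw [← ofReal_integral_eq_lintegral_ofReal (gPi_int t cc ht z)
    (Filter.Eventually.of_forall fun w => (Real.exp_pos _).le), gPi_eval t cc ht z]

lemma nsq_nonneg {n : ℕ} (z : Fin n → ℂ) : 0 ≤ nsq z :=
  Finset.sum_nonneg fun i _ => Complex.normSq_nonneg _

lemma continuous_nsq {n : ℕ} : Continuous (nsq (n := n)) := by
  unfold nsq
  exact continuous_finset_sum _ fun i _ =>
    Complex.continuous_normSq.comp (continuous_apply i)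

lemma continuous_herm {n : ℕ} (z : Fin n → ℂ) : Continuous (fun w => herm z w) := by
  unfold herm
  refine continuous_finset_sum _ fun i _ => Continuous.mul continuous_const ?_
  exact Complex.continuous_conj.comp (continuous_apply i)

lemma abs_kerAB {n : ℕ} (a b : ℝ) (z w : Fin n → ℂ) :
    ‖kerAB a b z w‖
      = rexp (-(a * nsq z) + (a + b) * (herm z w).re - b * nsq w) := by
  rw [kerAB, Complex.norm_exp]
  congr 1
  simp [Complex.add_re, Complex.sub_re, Complex.ofReal_re, Complex.mul_re, Complex.ofReal_im]

lemma nsq_sub {n : ℕ} (z w : Fin n → ℂ) :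
    nsq (z - w) = nsq z + nsq w - 2 * (herm z w).re := by
  unfold nsq herm
  rw [Complex.re_sum, Finset.mul_sum, ← Finset.sum_add_distrib, ← Finset.sum_sub_distrib]
  congr 1 with i
  rw [Pi.sub_apply, Complex.normSq_sub]

lemma nsq_sub_symm {n : ℕ} (z w : Fin n → ℂ) : nsq (z - w) = nsq (w - z) := by
  unfold nsq
  congr 1 with i
  have : (z - w) i = -((w - z) i) := by simp
  rw [this, Complex.normSq_neg]

lemma volume_univ_pi {n : ℕ} (hn : 0 < n) : (volume : Measure (Fin n → ℂ)) Set.univ = ⊤ := by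
  have hC : (volume : Measure ℂ) Set.univ = ⊤ := by
    have := Complex.volume_preserving_equiv_real_prod.measure_preimage
      (MeasurableSet.univ (α := ℝ × ℝ)).nullMeasurableSet
    simpa [← Set.univ_prod_univ, Measure.prod_prod] using this
  rw [MeasureTheory.volume_pi, Measure.pi_univ]
  simp [hC]
  omega

lemma measurable_gdens {n : ℕ} (t : ℝ) :
    Measurable fun z : Fin n → ℂ => ENNReal.ofReal ((t / π) ^ n * rexp (-t * nsq z)) := by
  apply ENNReal.measurable_ofReal.comp
  exact (continuous_const.mul ((continuous_const.mul continuous_nsq).rexp)).measurable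

lemma lint_gauss {n : ℕ} (t : ℝ) (g : (Fin n → ℂ) → ENNReal) :
    ∫⁻ z, g z ∂gaussMeasure n t
      = ∫⁻ z, ENNReal.ofReal ((t / π) ^ n * rexp (-t * nsq z)) * g z := by
  rw [gaussMeasure, lintegral_withDensity_eq_lintegral_mul_non_measurable _
    (measurable_gdens t) (Filter.Eventually.of_forall fun z => ENNReal.ofReal_lt_top)]
  rfl

end aux

lemma necessity {n : ℕ} (hn : 0 < n) {a b s p : ℝ} (ha : 0 < a) (hb : 0 < b)
    (hs : 0 < s) (hp : 1 ≤ p) (hne : p * (a + b) ≠ 2 * (s + p * a)) {C : ℝ}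
    (H : ∀ f : (Fin n → ℂ) → ℂ, MemLp f (ENNReal.ofReal p) (gaussMeasure n s) →
        (∀ᵐ z ∂(volume : Measure (Fin n → ℂ)),
          Integrable (fun w => ((‖kerAB a b z w‖ : ℝ) : ℂ) * f w) volume) ∧
        ∫⁻ z, ENNReal.ofReal
            (‖∫ w, ((‖kerAB a b z w‖ : ℝ) : ℂ) * f w‖ ^ p)
            ∂(gaussMeasure n s)
          ≤ ENNReal.ofReal (C ^ p) *
            ∫⁻ z, ENNReal.ofReal (‖f z‖ ^ p) ∂(gaussMeasure n s)) : False := by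
  have hp0 : (0:ℝ) < p := lt_of_lt_of_le one_pos hp
  have hdiv : s / p * p = s := div_mul_cancel₀ s hp0.ne'
  have huv : a + s / p ≠ b - s / p := by
    intro h
    apply hne
    have h3 := congrArg (fun x : ℝ => x * p) h
    rw [sub_mul, add_mul, hdiv] at h3
    linarith
  have hsq : 0 < ((a + s / p) - (b - s / p)) ^ 2 :=
    lt_of_le_of_ne (sq_nonneg _) (Ne.symm (pow_ne_zero 2 (sub_ne_zero.mpr huv)))
  have key : 4 * (a + s / p) * (b - s / p) < (a + b) ^ 2 := by nlinarith [hsq]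
  set c : ℝ := a + b with hcdef
  have hc : 0 < c := by positivity
  set u : ℝ := a + s / p with hudef
  have hu0 : 0 < u := by positivity
  set β : ℝ := c ^ 2 / (4 * u) with hβdef
  have hβ : 0 < β := by positivity
  set θ : ℝ := b - β with hθdef
  have hβgt : b - s / p < β := by
    rw [hβdef, lt_div_iff₀ (by positivity)]
    nlinarith [key]

  have hθlt : θ < s / p := by rw [hθdef]; linarith
  have hθp : θ * p < s := by
    rw [← lt_div_iff₀ hp0]
    exact hθlt
  have hcb : c ^ 2 / (4 * β) = u := by
    rw [hβdef]
    field_simp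
  -- the test function
  set F : (Fin n → ℂ) → ℂ := fun z => ((rexp (θ * nsq z) : ℝ) : ℂ) with hFdef
  have hFcont : Continuous F :=
    Complex.continuous_ofReal.comp ((continuous_const.mul continuous_nsq).rexp)
  have hP0 : (ENNReal.ofReal p) ≠ 0 := by
    simp only [ne_eq, ENNReal.ofReal_eq_zero, not_le]
    exact hp0
  have hPt : (ENNReal.ofReal p) ≠ ⊤ := ENNReal.ofReal_ne_top
  have habsF : ∀ z, ‖F z‖ = rexp (θ * nsq z) := by
    intro z
    rw [show F z = ((rexp (θ * nsq z) : ℝ) : ℂ) from rfl, Complex.norm_real, Real.norm_eq_abs]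
    exact abs_of_pos (Real.exp_pos _)
  -- the Lᵖ norm of the test function
  have hXval : ∫⁻ z, ENNReal.ofReal (‖F z‖ ^ p) ∂(gaussMeasure n s)
      = ENNReal.ofReal ((s / π) ^ n) * ENNReal.ofReal ((π / (s - θ * p)) ^ n) := by
    rw [lint_gauss]
    have hpt : ∀ z : Fin n → ℂ,
        ENNReal.ofReal ((s / π) ^ n * rexp (-s * nsq z)) * ENNReal.ofReal (‖F z‖ ^ p)
          = ENNReal.ofReal ((s / π) ^ n)
            * ENNReal.ofReal (rexp (0 * (herm (0 : Fin n → ℂ) z).re - (s - θ * p) * nsq z)) := by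
      intro z
      rw [habsF, ← Real.exp_mul, ← ENNReal.ofReal_mul (by positivity),
        ← ENNReal.ofReal_mul (by positivity)]
      congr 1
      rw [mul_assoc, ← Real.exp_add]
      congr 2
      ring
    simp_rw [hpt]
    rw [lintegral_const_mul' _ _ ENNReal.ofReal_ne_top,
      gPi_lint (s - θ * p) 0 (by linarith) 0]
    congr 2
    simp [nsq_nonneg]
  have hXlt : ∫⁻ z, ENNReal.ofReal (‖F z‖ ^ p) ∂(gaussMeasure n s) < ⊤ := by
    rw [hXval]
    exact ENNReal.mul_lt_top ENNReal.ofReal_lt_top ENNReal.ofReal_lt_top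
  have hmem : MemLp F (ENNReal.ofReal p) (gaussMeasure n s) := by
    refine ⟨hFcont.aestronglyMeasurable, ?_⟩
    rw [eLpNorm_eq_lintegral_rpow_enorm_toReal hP0 hPt, ENNReal.toReal_ofReal hp0.le]
    refine ENNReal.rpow_lt_top_of_nonneg (by positivity) ?_
    have : ∀ z : Fin n → ℂ, ‖F z‖ₑ ^ p = ENNReal.ofReal (‖F z‖ ^ p) := by
      intro z
      rw [← ofReal_norm,
        ENNReal.ofReal_rpow_of_pos (by rw [habsF]; exact Real.exp_pos _)]
    simp_rw [this]
    exact hXlt.ne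
  obtain ⟨-, hineq⟩ := H F hmem
  -- evaluate the operator on the test function
  have hTval : ∀ z : Fin n → ℂ, (∫ w, ((‖kerAB a b z w‖ : ℝ) : ℂ) * F w)
      = (((π / β) ^ n * rexp ((s / p) * nsq z) : ℝ) : ℂ) := by
    intro z
    have e1 : ∀ w : Fin n → ℂ, ((‖kerAB a b z w‖ : ℝ) : ℂ) * F w
        = ((rexp (-(a * nsq z)) * rexp (c * (herm z w).re - β * nsq w) : ℝ) : ℂ) := by
      intro w
      rw [hFdef, ← Complex.ofReal_mul, abs_kerAB, ← Real.exp_add, ← Real.exp_add]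
      congr 2
      rw [hθdef]
      ring
    calc ∫ w, ((‖kerAB a b z w‖ : ℝ) : ℂ) * F w
        = ∫ w : Fin n → ℂ,
            ((rexp (-(a * nsq z)) * rexp (c * (herm z w).re - β * nsq w) : ℝ) : ℂ) := by
          simp_rw [e1]
      _ = ((∫ w : Fin n → ℂ,
            rexp (-(a * nsq z)) * rexp (c * (herm z w).re - β * nsq w) : ℝ) : ℂ) :=
          integral_ofReal
      _ = (((π / β) ^ n * rexp ((s / p) * nsq z) : ℝ) : ℂ) := by
          congr 1
          rw [MeasureTheory.integral_const_mul, gPi_eval β c hβ z,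
            show c ^ 2 * nsq z / (4 * β) = u * nsq z by rw [← hcb]; ring]
          rw [show rexp (-(a * nsq z)) * ((π / β) ^ n * rexp (u * nsq z))
            = (π / β) ^ n * (rexp (-(a * nsq z)) * rexp (u * nsq z)) by ring, ← Real.exp_add]
          congr 2
          rw [hudef]
          ring
  -- the left-hand side is infinite
  have hLHS : ∫⁻ z, ENNReal.ofReal
      (‖∫ w, ((‖kerAB a b z w‖ : ℝ) : ℂ) * F w‖ ^ p)
      ∂(gaussMeasure n s) = ⊤ := by
    rw [lint_gauss]
    have hpt : ∀ z : Fin n → ℂ,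
        ENNReal.ofReal ((s / π) ^ n * rexp (-s * nsq z)) * ENNReal.ofReal
          (‖∫ w, ((‖kerAB a b z w‖ : ℝ) : ℂ) * F w‖ ^ p)
        = ENNReal.ofReal ((s / π) ^ n * ((π / β) ^ n) ^ p) := by
      intro z
      rw [hTval z, Complex.norm_real, Real.norm_eq_abs, abs_of_pos (by positivity),
        Real.mul_rpow (by positivity) (Real.exp_pos _).le, ← Real.exp_mul,
        ← ENNReal.ofReal_mul (by positivity)]
      congr 1
      rw [show s / p * nsq z * p = s * nsq z by field_simp]
      rw [show (s/π)^n * rexp (-s * nsq z) * (((π/β)^n)^p * rexp (s * nsq z))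
        = (s/π)^n * ((π/β)^n)^p * (rexp (-s * nsq z) * rexp (s * nsq z)) by ring,
        ← Real.exp_add]
      simp
    simp_rw [hpt]
    rw [lintegral_const, volume_univ_pi hn, ENNReal.mul_top]
    simp only [ne_eq, ENNReal.ofReal_eq_zero, not_le]
    positivity
  rw [hLHS] at hineq
  have : (⊤ : ℝ≥0∞) < ⊤ := lt_of_le_of_lt hineq
    (ENNReal.mul_lt_top ENNReal.ofReal_lt_top hXlt)
  exact lt_irrefl _ this

lemma continuous_kerAB_right {n : ℕ} (a b : ℝ) (z : Fin n → ℂ) :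
    Continuous fun w => kerAB a b z w := by
  unfold kerAB
  exact Complex.continuous_exp.comp <| (continuous_const.add
    (continuous_const.mul (continuous_herm z))).sub
    (Complex.continuous_ofReal.comp (continuous_const.mul continuous_nsq))

lemma sufficiency {n : ℕ} {a b s p : ℝ} (ha : 0 < a) (hb : 0 < b)
    (hs : 0 < s) (hp : 1 ≤ p) (hcond : p * (a + b) = 2 * (s + p * a)) :
    ∃ C : ℝ, 0 ≤ C ∧
      ∀ f : (Fin n → ℂ) → ℂ, MemLp f (ENNReal.ofReal p) (gaussMeasure n s) →
        (∀ᵐ z ∂(volume : Measure (Fin n → ℂ)),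
          Integrable (fun w => ((‖kerAB a b z w‖ : ℝ) : ℂ) * f w) volume) ∧
        ∫⁻ z, ENNReal.ofReal
            (‖∫ w, ((‖kerAB a b z w‖ : ℝ) : ℂ) * f w‖ ^ p)
            ∂(gaussMeasure n s)
          ≤ ENNReal.ofReal (C ^ p) *
            ∫⁻ z, ENNReal.ofReal (‖f z‖ ^ p) ∂(gaussMeasure n s) := by
  have hp0 : (0:ℝ) < p := lt_of_lt_of_le one_pos hp
  set α : ℝ := a + s / p with hαdef
  have hα : 0 < α := by positivity
  have hc2 : a + b = 2 * α := by
    rw [hαdef]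
    field_simp
    nlinarith [hcond]
  have hb' : b = α + s / p := by rw [hαdef] at hc2 ⊢; linarith
  have ha' : a = α - s / p := by rw [hαdef]; ring
  refine ⟨(π / α) ^ n, by positivity, ?_⟩
  set A : ℝ≥0∞ := ENNReal.ofReal ((π / α) ^ n) with hAdef
  have hA0 : A ≠ 0 := by
    rw [hAdef]
    simp only [ne_eq, ENNReal.ofReal_eq_zero, not_le]
    positivity
  have hAt : A ≠ ⊤ := ENNReal.ofReal_ne_top
  -- kernel identity
  have kerabs : ∀ z w : Fin n → ℂ, ‖kerAB a b z w‖
      = rexp ((s / p) * nsq z) * (rexp (-(α * nsq (z - w))) * rexp (-((s / p) * nsq w))) := by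
    intro z w
    rw [abs_kerAB, ← Real.exp_add, ← Real.exp_add]
    congr 1
    rw [nsq_sub, hc2, ha', hb']
    ring
  intro f hf
  -- measurability setup
  have hvac : (volume : Measure (Fin n → ℂ)) ≪ gaussMeasure n s := by
    refine Measure.AbsolutelyContinuous.mk fun N hNm hN => ?_
    rw [gaussMeasure, withDensity_apply_eq_zero (measurable_gdens s)] at hN
    have huniv : {x : Fin n → ℂ |
        ENNReal.ofReal ((s / π) ^ n * rexp (-s * nsq x)) ≠ 0} = Set.univ := by
      refine Set.eq_univ_of_forall fun x => ?_
      simp only [Set.mem_setOf_eq, ne_eq, ENNReal.ofReal_eq_zero, not_le]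
      positivity
    rwa [huniv, Set.univ_inter] at hN
  have hgv : gaussMeasure n s ≪ (volume : Measure (Fin n → ℂ)) :=
    withDensity_absolutelyContinuous _ _
  have hfv : AEStronglyMeasurable f volume := hf.1.mono_ac hvac
  set f₀ := hfv.mk f with hf₀def
  have hf₀m : StronglyMeasurable f₀ := hfv.stronglyMeasurable_mk
  have hff₀ : f =ᵐ[volume] f₀ := hfv.ae_eq_mk
  have hffμ : f =ᵐ[gaussMeasure n s] f₀ := hgv.ae_eq hff₀
  -- the weighted function and kernel
  set G : (Fin n → ℂ) → ℝ≥0∞ :=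
    fun w => ‖f₀ w‖ₑ * ENNReal.ofReal (rexp (-((s / p) * nsq w))) with hGdef
  have hGmeas : Measurable G := by
    refine Measurable.fun_mul ?_ ?_
    · exact hf₀m.measurable.enorm
    · exact ENNReal.measurable_ofReal.comp
        ((continuous_const.mul continuous_nsq).neg.rexp).measurable
  have hGfin : ∀ w, G w ≠ ⊤ := fun w => ENNReal.mul_ne_top ENNReal.coe_ne_top
    ENNReal.ofReal_ne_top
  set Kf : (Fin n → ℂ) → (Fin n → ℂ) → ℝ≥0∞ :=
    fun z w => ENNReal.ofReal (rexp (-(α * nsq (z - w)))) with hKdef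
  have hKcont : Continuous fun q : (Fin n → ℂ) × (Fin n → ℂ) => Kf q.1 q.2 :=
    ENNReal.continuous_ofReal.comp
      ((continuous_const.mul (continuous_nsq.comp (continuous_fst.sub continuous_snd))).neg.rexp)
  have hK0 : ∀ z w, Kf z w ≠ 0 := by
    intro z w
    rw [hKdef]
    simp only [ne_eq, ENNReal.ofReal_eq_zero, not_le]
    exact Real.exp_pos _
  have hKt : ∀ z w, Kf z w ≠ ⊤ := fun z w => ENNReal.ofReal_ne_top
  have hKshape : ∀ z w : Fin n → ℂ, rexp (-(α * nsq (z - w)))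
      = rexp (-(α * nsq z)) * rexp ((2 * α) * (herm z w).re - α * nsq w) := by
    intro z w
    rw [← Real.exp_add, nsq_sub]
    congr 1
    ring
  have hKint : ∀ z, ∫⁻ w, Kf z w = A := by
    intro z
    rw [hKdef]
    simp only
    calc ∫⁻ w, ENNReal.ofReal (rexp (-(α * nsq (z - w))))
        = ∫⁻ w, ENNReal.ofReal (rexp (-(α * nsq z)))
            * ENNReal.ofReal (rexp ((2 * α) * (herm z w).re - α * nsq w)) := by
          refine lintegral_congr fun w => ?_
          rw [hKshape, ENNReal.ofReal_mul (Real.exp_pos _).le]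
      _ = ENNReal.ofReal (rexp (-(α * nsq z)))
            * ENNReal.ofReal ((π / α) ^ n * rexp ((2 * α) ^ 2 * nsq z / (4 * α))) := by
          rw [lintegral_const_mul' _ _ ENNReal.ofReal_ne_top, gPi_lint α (2 * α) hα z]
      _ = A := by
          rw [hAdef, ← ENNReal.ofReal_mul (Real.exp_pos _).le]
          congr 1
          rw [show (2 * α) ^ 2 * nsq z / (4 * α) = α * nsq z by field_simp; ring]
          rw [show rexp (-(α * nsq z)) * ((π / α) ^ n * rexp (α * nsq z))
            = (π / α) ^ n * (rexp (-(α * nsq z)) * rexp (α * nsq z)) by ring, ← Real.exp_add]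
          simp
  have hKsym : ∀ z w, Kf z w = Kf w z := by
    intro z w
    rw [hKdef]
    simp only
    rw [nsq_sub_symm]
  have hKzint : ∀ w, ∫⁻ z, Kf z w = A := by
    intro w
    rw [lintegral_congr fun z => hKsym z w]
    exact hKint w
  set I : (Fin n → ℂ) → ℝ≥0∞ := fun z => ∫⁻ w, Kf z w * G w with hIdef
  have hImeas : Measurable I := by
    refine Measurable.lintegral_prod_right' (f := fun q => Kf q.1 q.2 * G q.2) ?_
    exact hKcont.measurable.mul (hGmeas.comp measurable_snd)
  set E : (Fin n → ℂ) → ℝ≥0∞ := fun z => ENNReal.ofReal (rexp ((s / p) * nsq z)) with hEdef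
  have hEt : ∀ z, E z ≠ ⊤ := fun z => ENNReal.ofReal_ne_top
  -- step 1 : pointwise norm of the integrand
  have hS1 : ∀ z, (∫⁻ w, ‖((‖kerAB a b z w‖ : ℝ) : ℂ) * f w‖ₑ) = E z * I z := by
    intro z
    have e1 : ∀ᵐ w ∂(volume : Measure (Fin n → ℂ)),
        ‖((‖kerAB a b z w‖ : ℝ) : ℂ) * f w‖ₑ
          = E z * (Kf z w * G w) := by
      filter_upwards [hff₀] with w hw
      rw [enorm_mul, ← ofReal_norm (((‖kerAB a b z w‖ : ℝ) : ℂ)), Complex.norm_real, Real.norm_eq_abs,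
        _root_.abs_of_nonneg (norm_nonneg _), kerabs, hw]
      simp only [hEdef, hKdef, hGdef]
      rw [ENNReal.ofReal_mul (Real.exp_pos _).le, ENNReal.ofReal_mul (Real.exp_pos _).le,
        ← ofReal_norm]
      ring
    rw [lintegral_congr_ae e1, lintegral_const_mul' _ _ (hEt z)]
  -- step 2 : Hölder
  have hHold : ∀ z, I z ^ p ≤ A ^ (p - 1) * ∫⁻ w, Kf z w * G w ^ p := by
    intro z
    rcases eq_or_lt_of_le hp with hp1 | hp1
    · rw [← hp1]
      norm_num
      exact le_rfl
    · have hpq := Real.HolderConjugate.conjExponent hp1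
      set q : ℝ := p.conjExponent with hqdef
      have hq0 : 0 < q := hpq.symm.pos
      have hsum : 1/p + 1/q = (1:ℝ) := by
        rw [one_div, one_div]
        exact hpq.inv_add_inv_eq_one
      have hmul : ∀ w, Kf z w * G w
          = ((fun w => Kf z w ^ (1/p) * G w) * (fun w => Kf z w ^ (1/q))) w := by
        intro w
        simp only [Pi.mul_apply]
        have hKK : Kf z w ^ (1/p) * Kf z w ^ (1/q) = Kf z w := by
          rw [← ENNReal.rpow_add _ _ (hK0 z w) (hKt z w), hsum, ENNReal.rpow_one]
        calc Kf z w * G w = (Kf z w ^ (1/p) * Kf z w ^ (1/q)) * G w := by rw [hKK]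
          _ = Kf z w ^ (1/p) * G w * Kf z w ^ (1/q) := by ring
      have hH := ENNReal.lintegral_mul_le_Lp_mul_Lq volume hpq
        (f := fun w => Kf z w ^ (1/p) * G w) (g := fun w => Kf z w ^ (1/q))
        (((hKcont.comp (Continuous.prodMk_right z)).measurable.pow_const _).mul hGmeas).aemeasurable
        ((hKcont.comp (Continuous.prodMk_right z)).measurable.pow_const _).aemeasurable
      rw [← lintegral_congr hmul] at hH
      have hf1 : ∀ w, (Kf z w ^ (1/p) * G w) ^ p = Kf z w * G w ^ p := by
        intro w
        rw [ENNReal.mul_rpow_of_nonneg _ _ hp0.le, ← ENNReal.rpow_mul,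
          one_div_mul_cancel hp0.ne', ENNReal.rpow_one]
      have hg1 : ∀ w, (Kf z w ^ (1/q)) ^ q = Kf z w := by
        intro w
        rw [← ENNReal.rpow_mul, one_div_mul_cancel hq0.ne', ENNReal.rpow_one]
      simp_rw [hf1, hg1] at hH
      rw [hKint z] at hH
      -- raise to the p-th power
      have h2 := ENNReal.rpow_le_rpow hH hp0.le
      rw [ENNReal.mul_rpow_of_nonneg _ _ hp0.le, ← ENNReal.rpow_mul, ← ENNReal.rpow_mul,
        one_div_mul_cancel hp0.ne', ENNReal.rpow_one] at h2
      rw [show 1/q * p = p - 1 by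
        rw [hqdef, Real.conjExponent]
        field_simp] at h2
      rw [mul_comm (A ^ (p-1))]
      exact h2
  -- step 3 : integrate and use Tonelli
  set T : ℝ≥0∞ := ∫⁻ w, G w ^ p with hTdef
  have hS3 : ∫⁻ z, I z ^ p ≤ A ^ p * T := by
    calc ∫⁻ z, I z ^ p ≤ ∫⁻ z, A ^ (p - 1) * ∫⁻ w, Kf z w * G w ^ p :=
          lintegral_mono fun z => hHold z
      _ = A ^ (p - 1) * ∫⁻ z, ∫⁻ w, Kf z w * G w ^ p :=
          lintegral_const_mul' _ _ (ENNReal.rpow_ne_top_of_nonneg (by linarith) hAt)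
      _ = A ^ (p - 1) * ∫⁻ w, ∫⁻ z, Kf z w * G w ^ p := by
          rw [lintegral_lintegral_swap]
          exact (hKcont.measurable.mul ((hGmeas.pow_const p).comp
            measurable_snd)).aemeasurable
      _ = A ^ (p - 1) * ∫⁻ w, A * G w ^ p := by
          congr 1
          refine lintegral_congr fun w => ?_
          rw [lintegral_mul_const' _ _ (ENNReal.rpow_ne_top_of_nonneg hp0.le (hGfin w)),
            hKzint w]
      _ = A ^ (p - 1) * (A * T) := by
          rw [lintegral_const_mul' _ _ hAt, hTdef]
      _ = A ^ p * T := by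
          rw [← mul_assoc]
          congr 1
          nth_rewrite 2 [show A = A ^ (1:ℝ) by rw [ENNReal.rpow_one]]
          rw [← ENNReal.rpow_add _ _ hA0 hAt]
          norm_num
  -- step 4 : identify the right-hand side
  have hpow : ∀ w, G w ^ p = ENNReal.ofReal (‖f₀ w‖ ^ p)
      * ENNReal.ofReal (rexp (-s * nsq w)) := by
    intro w
    rw [hGdef]
    simp only
    rw [ENNReal.mul_rpow_of_nonneg _ _ hp0.le, ← ofReal_norm,
      ENNReal.ofReal_rpow_of_nonneg (norm_nonneg _) hp0.le,
      ENNReal.ofReal_rpow_of_nonneg (Real.exp_pos _).le hp0.le,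
      ← Real.exp_mul,
      show -(s / p * nsq w) * p = -s * nsq w by
        have h := div_mul_cancel₀ s hp0.ne'
        linear_combination (-(nsq w)) * h]
  have hRHS : ∫⁻ z, ENNReal.ofReal (‖f z‖ ^ p) ∂(gaussMeasure n s)
      = ENNReal.ofReal ((s / π) ^ n) * T := by
    rw [lint_gauss]
    have e2 : ∀ᵐ z ∂(volume : Measure (Fin n → ℂ)),
        ENNReal.ofReal ((s / π) ^ n * rexp (-s * nsq z))
            * ENNReal.ofReal (‖f z‖ ^ p)
          = ENNReal.ofReal ((s / π) ^ n) * G z ^ p := by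
      filter_upwards [hff₀] with z hz
      rw [hz, hpow, ENNReal.ofReal_mul (by positivity)]
      ring
    rw [lintegral_congr_ae e2, lintegral_const_mul' _ _ ENNReal.ofReal_ne_top, hTdef]
  have hfl : ∫⁻ z, ENNReal.ofReal (‖f z‖ ^ p) ∂(gaussMeasure n s) < ⊤ := by
    have h1 := hf.2
    have hP0' : (ENNReal.ofReal p) ≠ 0 := by
      simp only [ne_eq, ENNReal.ofReal_eq_zero, not_le]
      exact hp0
    rw [eLpNorm_eq_lintegral_rpow_enorm_toReal hP0' ENNReal.ofReal_ne_top,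
      ENNReal.toReal_ofReal hp0.le] at h1
    have h2 := (ENNReal.rpow_lt_top_iff_of_pos (by positivity : (0:ℝ) < 1/p)).mp h1
    have e3 : ∀ z, ‖f z‖ₑ ^ p = ENNReal.ofReal (‖f z‖ ^ p) := by
      intro z
      rw [← ofReal_norm, ENNReal.ofReal_rpow_of_nonneg (norm_nonneg _) hp0.le]
    simp_rw [e3] at h2
    exact h2
  have hTfin : T ≠ ⊤ := by
    refine (ENNReal.lt_top_of_mul_ne_top_right
      (a := ENNReal.ofReal ((s / π) ^ n)) ?_ ?_).ne
    · rw [← hRHS]; exact hfl.ne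
    · simp only [ne_eq, ENNReal.ofReal_eq_zero, not_le]; positivity
  have hIlt : ∫⁻ z, I z ^ p ≠ ⊤ := by
    refine (lt_of_le_of_lt hS3 ?_).ne
    exact ENNReal.mul_lt_top (ENNReal.rpow_ne_top_of_nonneg hp0.le hAt).lt_top hTfin.lt_top
  have haeI : ∀ᵐ z ∂(volume : Measure (Fin n → ℂ)), I z < ⊤ := by
    have := ae_lt_top (hImeas.pow_const p) hIlt
    filter_upwards [this] with z hz
    by_contra h
    rw [not_lt, top_le_iff] at h
    rw [h, ENNReal.top_rpow_of_pos hp0] at hz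
    exact (lt_irrefl _ hz)
  constructor
  · -- integrability a.e.
    filter_upwards [haeI] with z hz
    refine ⟨((Complex.continuous_ofReal.comp
      (continuous_norm.comp (continuous_kerAB_right a b z))).aestronglyMeasurable).mul
      hfv, ?_⟩
    show (∫⁻ w, ‖((‖kerAB a b z w‖ : ℝ) : ℂ) * f w‖ₑ) < ⊤
    rw [hS1 z]
    exact ENNReal.mul_lt_top (hEt z).lt_top hz
  · -- the norm inequality
    have hS6 : ∫⁻ z, ENNReal.ofReal
        (‖∫ w, ((‖kerAB a b z w‖ : ℝ) : ℂ) * f w‖ ^ p)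
        ∂(gaussMeasure n s) ≤ ENNReal.ofReal ((s / π) ^ n) * (A ^ p * T) := by
      rw [lint_gauss]
      calc ∫⁻ z, ENNReal.ofReal ((s / π) ^ n * rexp (-s * nsq z)) * ENNReal.ofReal
            (‖∫ w, ((‖kerAB a b z w‖ : ℝ) : ℂ) * f w‖ ^ p)
          ≤ ∫⁻ z, ENNReal.ofReal ((s / π) ^ n) * I z ^ p := by
            refine lintegral_mono fun z => ?_
            have e4 : ENNReal.ofReal
                (‖∫ w, ((‖kerAB a b z w‖ : ℝ) : ℂ) * f w‖ ^ p)
                ≤ (E z * I z) ^ p := by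
              rw [← hS1 z]
              have e5 : ‖∫ w, ((‖kerAB a b z w‖ : ℝ) : ℂ) * f w‖ₑ
                  ≤ ∫⁻ w, ‖((‖kerAB a b z w‖ : ℝ) : ℂ) * f w‖ₑ :=
                enorm_integral_le_lintegral_enorm _
              rw [← ENNReal.ofReal_rpow_of_nonneg (norm_nonneg _)
                hp0.le, ofReal_norm]
              exact ENNReal.rpow_le_rpow e5 hp0.le
            calc ENNReal.ofReal ((s / π) ^ n * rexp (-s * nsq z)) * ENNReal.ofReal
                  (‖∫ w, ((‖kerAB a b z w‖ : ℝ) : ℂ) * f w‖ ^ p)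
                ≤ ENNReal.ofReal ((s / π) ^ n * rexp (-s * nsq z)) * (E z * I z) ^ p :=
                  mul_le_mul_right e4 _
              _ = ENNReal.ofReal ((s / π) ^ n) * I z ^ p := by
                  rw [ENNReal.mul_rpow_of_nonneg _ _ hp0.le, ← mul_assoc]
                  congr 2
                  rw [hEdef]
                  simp only
                  rw [ENNReal.ofReal_rpow_of_pos (Real.exp_pos _), ← Real.exp_mul,
                    ENNReal.ofReal_mul (by positivity), mul_assoc,
                    ← ENNReal.ofReal_mul (by positivity), ← Real.exp_add]
                  rw [show -s * nsq z + s / p * nsq z * p = 0 by field_simp; ring]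
                  simp
        _ = ENNReal.ofReal ((s / π) ^ n) * ∫⁻ z, I z ^ p :=
            lintegral_const_mul' _ _ ENNReal.ofReal_ne_top
        _ ≤ ENNReal.ofReal ((s / π) ^ n) * (A ^ p * T) := mul_le_mul_right hS3 _
    refine le_trans hS6 ?_
    rw [hRHS, hAdef, ENNReal.ofReal_rpow_of_nonneg (by positivity) hp0.le]
    rw [show ENNReal.ofReal ((s / π) ^ n) * (ENNReal.ofReal (((π / α) ^ n) ^ p) * T)
      = ENNReal.ofReal (((π / α) ^ n) ^ p) * (ENNReal.ofReal ((s / π) ^ n) * T) by ring]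

theorem stmt17 (n : ℕ) (hn : 0 < n) (a b s p : ℝ) (ha : 0 < a) (hb : 0 < b)
    (hs : 0 < s) (hp : 1 ≤ p) :
    (∃ C : ℝ, 0 ≤ C ∧
      ∀ f : (Fin n → ℂ) → ℂ, MemLp f (ENNReal.ofReal p) (gaussMeasure n s) →
        (∀ᵐ z ∂(volume : Measure (Fin n → ℂ)),
          Integrable (fun w => ((‖kerAB a b z w‖ : ℝ) : ℂ) * f w) volume) ∧
        ∫⁻ z, ENNReal.ofReal
            (‖∫ w, ((‖kerAB a b z w‖ : ℝ) : ℂ) * f w‖ ^ p)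
            ∂(gaussMeasure n s)
          ≤ ENNReal.ofReal (C ^ p) *
            ∫⁻ z, ENNReal.ofReal (‖f z‖ ^ p) ∂(gaussMeasure n s)) ↔
    p * (a + b) = 2 * (s + p * a) := by
  constructor
  · rintro ⟨C, hC0, H⟩
    by_contra hne
    exact necessity hn ha hb hs hp hne H
  · intro hcond
    exact sufficiency ha hb hs hp hcond
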